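/- Let w be a word over Σ with ι(w) = k ≥ 1 and let s ∈ ℕ. Then ι(w^s) − ι(w^{s−1}) = k + 1 if and only if alph(r(w^{s−1})·r(w^R)) = Σ. -/

import Mathlib

open List

variable {α : Type*}

/-- `w` is `k`-universal: every word of length `k` over the alphabet `α`
is a scattered factor (subsequence) of `w`. -/
def IsUniversal [Fintype α] (k : ℕ) (w : List α) : Prop :=
  ∀ u : List α, u.length = k → u.Sublist w

/-- The universality index `ι(w)`: the largest `k` such that `w` is `k`-universal. -/
noncomputable def univIndex [Fintype α] (w : List α) : ℕ :=
  sSup {k | IsUniversal k w}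

/-- The circular universality index `ζ(w)`: the largest `k` such that some
conjugate of `w` is `k`-universal. -/
noncomputable def circIndex [Fintype α] (w : List α) : ℕ :=
  sSup {k | ∃ u v : List α, w = u ++ v ∧ IsUniversal k (v ++ u)}

/-- `wpow w s = w^s`, the `s`-fold concatenation of `w`. -/
def wpow (w : List α) (s : ℕ) : List α := (List.replicate s w).flatten

/-- Auxiliary (fuelled) computation of the remainder of the arch factorisation:
greedily remove the shortest prefix containing every letter of the alphabet. -/
def remAux [Fintype α] [DecidableEq α] : ℕ → List α → List α
  | 0, w => w
  | (n+1), w =>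
    match (List.range' 1 w.length).find?
        (fun m => decide ((w.take m).toFinset = Finset.univ)) with
    | none => w
    | some m => remAux n (w.drop m)

/-- `rem w = r(w)`, the remainder of the arch factorisation of `w`. -/
def rem [Fintype α] [DecidableEq α] (w : List α) : List α := remAux w.length w

/-- Auxiliary (fuelled) computation of the list of arches of `w`. -/
def archesAux [Fintype α] [DecidableEq α] : ℕ → List α → List (List α)
  | 0, _ => []
  | (n+1), w =>
    match (List.range' 1 w.length).find?
        (fun m => decide ((w.take m).toFinset = Finset.univ)) with
    | none => []
    | some m => (w.take m) :: archesAux n (w.drop m)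

/-- `arches w`: the list `[arch₁(w), …, arch_{ι(w)}(w)]` of arches of `w`. -/
def arches [Fintype α] [DecidableEq α] (w : List α) : List (List α) :=
  archesAux w.length w

set_option linter.unusedSectionVars false

section Helpers
variable [Fintype α] [DecidableEq α]

/-- An arch: contains the whole alphabet, but its `dropLast` does not. -/
def IsArch (a : List α) : Prop :=
  a.toFinset = Finset.univ ∧ a.dropLast.toFinset ≠ Finset.univ

/-- Arch factorisation predicate. -/
def ArchFact (w : List α) (L : List (List α)) (R : List α) : Prop :=
  w = L.flatten ++ R ∧ (∀ a ∈ L, IsArch a) ∧ R.toFinset ≠ Finset.univ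

lemma prefix_toFinset_subset {l₁ l₂ : List α} (h : l₁ <+: l₂) :
    l₁.toFinset ⊆ l₂.toFinset :=
  fun x hx => List.mem_toFinset.2 (h.subset (List.mem_toFinset.1 hx))

lemma isArch_prefix_eq {a a' w : List α} (ha : IsArch a) (ha' : IsArch a')
    (h : a <+: w) (h' : a' <+: w) : a = a' := by
  have key : ∀ {b b' : List α}, IsArch b → IsArch b' → b <+: b' → b = b' := by
    intro b b' hb hb' hp
    by_contra hne
    have hlt : b.length < b'.length := lt_of_le_of_ne hp.length_le
      (fun hl => hne (hp.eq_of_length hl))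
    have hb'' : b <+: b'.dropLast := by
      have h1 : b'.take b.length = b := (List.prefix_iff_eq_take.1 hp).symm
      rw [List.dropLast_eq_take]
      have h2 : (b'.take (b'.length - 1)).take b.length = b := by
        rw [List.take_take, min_eq_left (by omega), h1]
      exact h2 ▸ List.take_prefix _ _
    exact hb'.2 (Finset.univ_subset_iff.1 (hb.1 ▸ prefix_toFinset_subset hb''))
  rcases List.prefix_or_prefix_of_prefix h h' with h1 | h1
  · exact key ha ha' h1
  · exact (key ha' ha h1).symm

lemma archFact_unique : ∀ (L : List (List α)) {w R : List α} {L' : List (List α)} {R' : List α},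
    ArchFact w L R → ArchFact w L' R' → L = L' ∧ R = R' := by
  intro L
  induction L with
  | nil =>
    intro w R L' R' h h'
    rcases L' with _ | ⟨a, T⟩
    · exact ⟨rfl, by simpa using h.1.symm.trans h'.1⟩
    · exfalso
      apply h.2.2
      have hw : w = R := by simpa using h.1
      have hfull : a.toFinset = Finset.univ := (h'.2.1 a (by simp)).1
      have hpre : a <+: w := ⟨T.flatten ++ R', by simp [h'.1]⟩
      rw [← hw]
      exact Finset.univ_subset_iff.1 (hfull ▸ prefix_toFinset_subset hpre)
  | cons a T ih =>
    intro w R L' R' h h'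
    rcases L' with _ | ⟨a', T'⟩
    · exfalso
      apply h'.2.2
      have hw : w = R' := by simpa using h'.1
      have hfull : a.toFinset = Finset.univ := (h.2.1 a (by simp)).1
      have hpre : a <+: w := ⟨T.flatten ++ R, by simp [h.1]⟩
      rw [← hw]
      exact Finset.univ_subset_iff.1 (hfull ▸ prefix_toFinset_subset hpre)
    · have haa : a = a' := by
        refine isArch_prefix_eq (w := w) (h.2.1 a (by simp)) (h'.2.1 a' (by simp)) ?_ ?_
        · exact ⟨T.flatten ++ R, by simp [h.1]⟩
        · exact ⟨T'.flatten ++ R', by simp [h'.1]⟩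
      subst haa
      have heq : T.flatten ++ R = T'.flatten ++ R' := by
        have h1 : a ++ (T.flatten ++ R) = a ++ (T'.flatten ++ R') := by
          have := h.1.symm.trans h'.1
          simpa using this
        exact (List.append_cancel_left h1)
      have hT : ArchFact (T.flatten ++ R) T R :=
        ⟨rfl, fun b hb => h.2.1 b (by simp [hb]), h.2.2⟩
      have hT' : ArchFact (T.flatten ++ R) T' R' :=
        ⟨heq, fun b hb => h'.2.1 b (by simp [hb]), h'.2.2⟩
      obtain ⟨e1, e2⟩ := ih hT hT'
      exact ⟨by rw [e1], e2⟩

lemma aux_spec [Nonempty α] : ∀ (n : ℕ) (w : List α), w.length ≤ n →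
    ArchFact w (archesAux n w) (remAux n w) := by
  intro n
  induction n with
  | zero =>
    intro w h
    have : w = [] := List.length_eq_zero_iff.1 (Nat.le_zero.1 h)
    subst this
    refine ⟨by simp [archesAux, remAux], by simp [archesAux], ?_⟩
    simp only [remAux, toFinset_nil]
    exact fun he => (Finset.univ_nonempty).ne_empty he.symm
  | succ n ih =>
    intro w h
    rcases hF : (List.range' 1 w.length).find?
        (fun m => decide ((w.take m).toFinset = Finset.univ)) with _ | m
    · have hnot : w.toFinset ≠ Finset.univ := by
        intro hfull
        have hne : w ≠ [] := by
          intro he; subst he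
          exact (Finset.univ_nonempty).ne_empty (by simpa using hfull.symm)
        have hlen0 : w.length ≠ 0 := fun h0 => hne (List.length_eq_zero_iff.1 h0)
        have hmem : w.length ∈ List.range' 1 w.length := by
          rw [List.mem_range']
          exact ⟨w.length - 1, by omega, by omega⟩
        have := List.find?_eq_none.1 hF _ hmem
        simp only [decide_eq_true_eq] at this
        exact this (by simpa using hfull)
      refine ⟨?_, ?_, ?_⟩
      · simp [archesAux, remAux, hF]
      · simp [archesAux, hF]
      · simpa only [remAux, hF] using hnot
    · obtain ⟨hpm, as, bs, hsplit, hmin⟩ := List.find?_eq_some_iff_append.1 hF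
      have hpm' : (w.take m).toFinset = Finset.univ := by simpa using hpm
      have hm_mem : m ∈ List.range' 1 w.length := hsplit ▸ by simp
      obtain ⟨i, hi, hmi⟩ := List.mem_range'.1 hm_mem
      have hm1 : 1 ≤ m := by omega
      have hmlen : m ≤ w.length := by omega
      -- minimality
      have hmin' : (w.take (m - 1)).toFinset ≠ Finset.univ := by
        rcases Nat.lt_or_ge m 2 with h2 | h2
        · have : m = 1 := by omega
          subst this
          simp only [Nat.sub_self, List.take_zero, toFinset_nil]
          exact fun he => (Finset.univ_nonempty).ne_empty he.symm
        · have hpw : Pairwise (· < ·) (as ++ m :: bs) := by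
            rw [← hsplit]; exact List.pairwise_lt_range' (s := 1) (n := w.length)
          have hmem1 : m - 1 ∈ List.range' 1 w.length := by
            rw [List.mem_range']
            exact ⟨m - 2, by omega, by omega⟩
          rw [hsplit] at hmem1
          have hin_as : m - 1 ∈ as := by
            rcases List.mem_append.1 hmem1 with h1 | h1
            · exact h1
            · exfalso
              rcases List.mem_cons.1 h1 with h1 | h1
              · omega
              · have := (List.pairwise_cons.1 (List.pairwise_append.1 hpw).2.1).1 _ h1
                omega
          have := hmin _ hin_as
          simpa using this
      have hdl : (w.take m).dropLast = w.take (m - 1) := by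
        rw [List.dropLast_eq_take, List.length_take, List.take_take]
        congr 1
        omega
      have harch : IsArch (w.take m) := ⟨hpm', by rw [hdl]; exact hmin'⟩
      have hrec := ih (w.drop m) (by rw [List.length_drop]; omega)
      refine ⟨?_, ?_, ?_⟩
      · simp only [archesAux, remAux, hF, List.flatten_cons, List.append_assoc]
        rw [← hrec.1, List.take_append_drop]
      · simp only [archesAux, hF]
        intro a ha
        rcases List.mem_cons.1 ha with rfl | ha
        · exact harch
        · exact hrec.2.1 a ha
      · simpa only [remAux, hF] using hrec.2.2

lemma arches_spec [Nonempty α] (w : List α) : ArchFact w (arches w) (rem w) :=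
  aux_spec w.length w le_rfl

-- universality lemmas

lemma sublist_join_of_full : ∀ (L : List (List α)) (u : List α), u.length = L.length →
    (∀ a ∈ L, a.toFinset = Finset.univ) → u <+ L.flatten := by
  intro L
  induction L with
  | nil => intro u hu _; simp at hu; simp [hu]
  | cons a T ih =>
    intro u hu hfull
    rcases u with _ | ⟨x, u'⟩
    · simp
    · simp only [List.length_cons] at hu
      have hx : x ∈ a := by
        have : x ∈ a.toFinset := by rw [hfull a (by simp)]; exact Finset.mem_univ x
        exact List.mem_toFinset.1 this
      have h1 : [x] <+ a := List.singleton_sublist.2 hx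
      have h2 : u' <+ T.flatten := ih u' (by omega) (fun b hb => hfull b (by simp [hb]))
      simpa using List.Sublist.append h1 h2

lemma isUniversal_of_archFact {w : List α} {L : List (List α)} {R : List α}
    (h : ArchFact w L R) : IsUniversal L.length w := by
  intro u hu
  have h1 : u <+ L.flatten := sublist_join_of_full L u hu (fun a ha => (h.2.1 a ha).1)
  rw [h.1]
  exact h1.trans (List.sublist_append_left _ _)

lemma cons_sublist_arch {b t y : List α} {x : α} (hx : x ∉ b)
    (h : x :: t <+ (b ++ [x]) ++ y) : t <+ y := by
  rw [List.sublist_append_iff] at h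
  obtain ⟨s₁, s₂, hs, h₁, h₂⟩ := h
  rcases s₁ with _ | ⟨z, s₁'⟩
  · simp at hs
    subst hs
    exact (List.sublist_cons_self x t).trans h₂
  · simp only [List.cons_append, List.cons.injEq] at hs
    obtain ⟨rfl, hs⟩ := hs
    rw [List.sublist_append_iff] at h₁
    obtain ⟨u₁, u₂, hu, hu₁, hu₂⟩ := h₁
    rcases u₁ with _ | ⟨z', u₁'⟩
    · simp only [List.nil_append] at hu
      have hlen : s₁'.length + 1 ≤ 1 := by
        have h3 := hu₂.length_le
        rw [← hu] at h3
        simpa using h3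
      have hnil : s₁' = [] := List.length_eq_zero_iff.1 (by omega)
      subst hnil
      rw [hs]
      exact (List.nil_append s₂) ▸ h₂
    · simp only [List.cons_append, List.cons.injEq] at hu
      obtain ⟨rfl, -⟩ := hu
      exact absurd (hu₁.subset (by simp)) hx

lemma bad_not_sublist [Nonempty α] : ∀ (L : List (List α)) (R : List α) (c : α),
    (∀ a ∈ L, IsArch a) → c ∉ R →
    ¬ (L.map (fun a => a.getLastD c) ++ [c]) <+ L.flatten ++ R := by
  intro L
  induction L with
  | nil =>
    intro R c _ hc h
    simp only [List.map_nil, List.nil_append, List.flatten_nil] at h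
    exact hc (List.singleton_sublist.1 h)
  | cons a T ih =>
    intro R c hL hc h
    have ha : IsArch a := hL a (by simp)
    have hane : a ≠ [] := by
      intro he; subst he
      exact (Finset.univ_nonempty).ne_empty (by simpa using ha.1.symm)
    set x := a.getLast hane with hxdef
    have hsplit_a : a.dropLast ++ [x] = a := List.dropLast_append_getLast hane
    have hxd : a.getLastD c = x := by
      rw [List.getLastD_eq_getLast?, List.getLast?_eq_getLast hane]
      rfl
    have hxnot : x ∉ a.dropLast := by
      intro hmem
      apply ha.2
      apply Finset.univ_subset_iff.1
      rw [← ha.1]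
      intro z hz
      rw [List.mem_toFinset] at hz ⊢
      rw [← hsplit_a] at hz
      rcases List.mem_append.1 hz with h1 | h1
      · exact h1
      · simp at h1; subst h1; exact hmem
    simp only [List.map_cons, List.flatten_cons, List.cons_append] at h
    rw [hxd] at h
    rw [← hsplit_a] at h
    have h' : (T.map (fun a => a.getLastD c) ++ [c]) <+ T.flatten ++ R := by
      apply cons_sublist_arch hxnot
      simpa [List.append_assoc] using h
    exact ih R c (fun b hb => hL b (by simp [hb])) hc h'

-- univIndex characterisation

lemma isUniversal_mono [Nonempty α] {w : List α} {m k : ℕ} (h : IsUniversal k w)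
    (hm : m ≤ k) : IsUniversal m w := by
  intro u hu
  have d : α := Classical.arbitrary α
  have h1 : u ++ List.replicate (k - m) d <+ w := by
    apply h
    simp [hu]
    omega
  exact (List.sublist_append_left _ _).trans h1

lemma univIndex_eq_of [Nonempty α] {w : List α} {n : ℕ} (hu : IsUniversal n w)
    (hn : ¬ IsUniversal (n+1) w) : univIndex w = n := by
  have hub : ∀ k ∈ {k | IsUniversal k w}, k ≤ n := by
    intro k hk
    by_contra hlt
    exact hn (isUniversal_mono hk (by omega))
  apply Nat.le_antisymm
  · exact csSup_le ⟨n, hu⟩ hub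
  · exact le_csSup ⟨n, hub⟩ hu

lemma univIndex_of_archFact [Nonempty α] {w : List α} {L : List (List α)} {R : List α}
    (h : ArchFact w L R) : univIndex w = L.length := by
  apply univIndex_eq_of (isUniversal_of_archFact h)
  intro hU
  obtain ⟨c, hc⟩ : ∃ c, c ∉ R := by
    by_contra hall
    push_neg at hall
    exact h.2.2 (Finset.eq_univ_iff_forall.2 fun x => List.mem_toFinset.2 (hall x))
  have hbad := hU (L.map (fun a => a.getLastD c) ++ [c]) (by simp)
  rw [h.1] at hbad
  exact bad_not_sublist L R c h.2.1 hc hbad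

lemma univIndex_arches [Nonempty α] (w : List α) :
    univIndex w = (arches w).length :=
  univIndex_of_archFact (arches_spec w)

lemma univIndex_reverse (w : List α) : univIndex w.reverse = univIndex w := by
  unfold univIndex
  congr 1
  ext n
  simp only [Set.mem_setOf_eq]
  constructor
  · intro h u hu
    have := (h u.reverse (by simp [hu])).reverse
    simpa using this
  · intro h u hu
    have := (h u.reverse (by simp [hu])).reverse
    simpa using this

lemma univIndex_append [Nonempty α] (u v : List α) :
    univIndex (u ++ v) = univIndex u + univIndex (rem u ++ v) := by
  have h1 := arches_spec u
  have h2 := arches_spec (rem u ++ v)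
  have h3 : ArchFact (u ++ v) (arches u ++ arches (rem u ++ v)) (rem (rem u ++ v)) := by
    refine ⟨?_, ?_, h2.2.2⟩
    · rw [List.flatten_append, List.append_assoc, ← h2.1]
      conv_lhs => rw [h1.1]
      rw [List.append_assoc]
    · intro a ha
      rcases List.mem_append.1 ha with h | h
      · exact h1.2.1 a h
      · exact h2.2.1 a h
  rw [univIndex_of_archFact h3, List.length_append, ← univIndex_arches,
    ← univIndex_arches]

lemma rem_not_full [Nonempty α] (w : List α) : (rem w).toFinset ≠ Finset.univ :=
  (arches_spec w).2.2

lemma univIndex_small [Nonempty α] {x y : List α} (hx : x.toFinset ≠ Finset.univ)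
    (hy : y.toFinset ≠ Finset.univ) :
    univIndex (x ++ y) = if (x ++ y).toFinset = Finset.univ then 1 else 0 := by
  obtain ⟨c, hc⟩ : ∃ c, c ∉ x := by
    by_contra hall; push_neg at hall
    exact hx (Finset.eq_univ_iff_forall.2 fun z => List.mem_toFinset.2 (hall z))
  obtain ⟨d, hd⟩ : ∃ d, d ∉ y := by
    by_contra hall; push_neg at hall
    exact hy (Finset.eq_univ_iff_forall.2 fun z => List.mem_toFinset.2 (hall z))
  split_ifs with hfull
  · apply univIndex_eq_of
    · intro u hu
      rcases List.length_eq_one_iff.1 hu with ⟨a, rfl⟩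
      apply List.singleton_sublist.2
      have : a ∈ (x ++ y).toFinset := hfull ▸ Finset.mem_univ a
      exact List.mem_toFinset.1 this
    · intro hU
      have hbad := hU [c, d] rfl
      rw [List.sublist_append_iff] at hbad
      obtain ⟨s₁, s₂, hs, h₁, h₂⟩ := hbad
      rcases s₁ with _ | ⟨z, s₁'⟩
      · simp only [List.nil_append] at hs
        subst hs
        exact hd (h₂.subset (by simp))
      · rcases s₁' with _ | ⟨z', s₁''⟩
        · simp only [List.cons_append, List.nil_append, List.cons.injEq] at hs
          obtain ⟨rfl, hs⟩ := hs
          subst hs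
          exact hd (h₂.subset (by simp))
        · obtain ⟨rfl, rfl, -, -⟩ : c = z ∧ d = z' ∧ s₁'' = [] ∧ s₂ = [] := by
            simpa using hs
          exact hc (h₁.subset (by simp))
  · apply univIndex_eq_of
    · intro u hu
      rw [List.length_eq_zero_iff.1 hu]
      exact List.nil_sublist _
    · intro hU
      obtain ⟨e, he⟩ : ∃ e, e ∉ (x ++ y).toFinset := by
        by_contra hall; push_neg at hall
        exact hfull (Finset.eq_univ_iff_forall.2 hall)
      have hbad := hU [e] rfl
      exact he (List.mem_toFinset.2 (List.singleton_sublist.1 hbad))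

end Helpers

lemma nonempty_of_univIndex_pos [Fintype α] {w : List α} {k : ℕ}
    (hk : univIndex w = k) (hk1 : 1 ≤ k) : Nonempty α := by
  by_contra hne
  have hall : ∀ n, IsUniversal n w := by
    intro n u hu
    rcases u with _ | ⟨x, u'⟩
    · exact List.nil_sublist w
    · exact absurd ⟨x⟩ hne
  have hnb : ¬ BddAbove {k | IsUniversal k w} := by
    rintro ⟨b, hb⟩
    have hmem : (b + 1) ∈ {k | IsUniversal k w} := hall (b + 1)
    have := hb hmem
    omega
  rw [univIndex, csSup_of_not_bddAbove hnb, csSup_empty] at hk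
  simp at hk
  omega

lemma wpow_succ (w : List α) (n : ℕ) : wpow w (n + 1) = wpow w n ++ w := by
  show (List.replicate (n+1) w).flatten = (List.replicate n w).flatten ++ w
  rw [List.replicate_succ', List.flatten_append]
  simp

theorem growth_succ_iff_rem [Fintype α] [DecidableEq α] (w : List α) (k : ℕ)
    (hk : univIndex w = k) (hk1 : 1 ≤ k) (s : ℕ) (hs : 1 ≤ s) :
    univIndex (wpow w s) = univIndex (wpow w (s - 1)) + (k + 1) ↔
      (rem (wpow w (s - 1)) ++ rem w.reverse).toFinset = Finset.univ := by
  have hne : Nonempty α := nonempty_of_univIndex_pos hk hk1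
  set W := wpow w (s - 1) with hW
  set r := rem W with hr
  have hpow : wpow w s = W ++ w := by
    rw [hW, ← wpow_succ]
    congr 1
    omega
  have step1 : univIndex (wpow w s) = univIndex W + univIndex (r ++ w) := by
    rw [hpow, univIndex_append]
  have step2 : univIndex (r ++ w) =
      k + univIndex (rem w.reverse ++ r.reverse) := by
    rw [← univIndex_reverse (r ++ w), List.reverse_append, univIndex_append,
      univIndex_reverse, hk]
  have hrfull : r.reverse.toFinset ≠ Finset.univ := by
    rw [List.toFinset_reverse]
    exact rem_not_full W
  have step3 : univIndex (rem w.reverse ++ r.reverse) =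
      if (rem w.reverse ++ r.reverse).toFinset = Finset.univ then 1 else 0 :=
    univIndex_small (rem_not_full w.reverse) hrfull
  have hsets : (rem w.reverse ++ r.reverse).toFinset = (r ++ rem w.reverse).toFinset := by
    simp [List.toFinset_append, Finset.union_comm]
  rw [step1, step2, step3, hsets]
  constructor
  · intro h
    split_ifs at h with hcond
    · exact hcond
    · omega
  · intro h
    rw [if_pos h]
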